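/- Assume d i ≥ 2 for all i and 1 ≤ k ≤ n. Let ψ ∈ V be a nonzero product vector, i.e. ψ(x) = ∏_{i : Fin n} f_i(x i) for functions f_i : Fin (d i) → ℂ with each f_i nonzero. Then there exist nonzero subspaces S₁, S₂ ≤ V such that L_k(span{ψ}) ≤ L_k(S₁) ∨ L_k(S₂), yet L_k(span{ψ}) ≰ L_k(S₁) and L_k(span{ψ}) ≰ L_k(S₂). In other words, the element of Θ_k whose maximal pre-image is a single product state is not a join prime of Θ_k. -/

import Mathlib

/-!
Setup: `n` particles with local dimensions `d : Fin n → ℕ`.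
`V d` is the `n`-particle space of functions `(∀ i, Fin (d i)) → ℂ`.
For `J : Finset (Fin n)`, `PConfig d J` is the type of `J`-configurations and
`VJ d J` the corresponding space.  `merge`, `contrL` (the contraction `ψ ↦ ψ_b`),
the reduced space `red d J S`, the tuple `Lk d S`, the maximal pre-image `MPI`,
and `k`-local frustration-free ground-state spaces are as in the paper.
-/

namespace GSS

variable {n : ℕ}

abbrev Config (d : Fin n → ℕ) : Type := ∀ i : Fin n, Fin (d i)

abbrev V (d : Fin n → ℕ) : Type := Config d → ℂ

abbrev PConfig (d : Fin n → ℕ) (J : Finset (Fin n)) : Type := ∀ i : J, Fin (d i.1)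

abbrev VJ (d : Fin n → ℕ) (J : Finset (Fin n)) : Type := PConfig d J → ℂ

/-- The full configuration equal to `a` on `J` and to `b` on `Jᶜ`. -/
def merge (d : Fin n → ℕ) (J : Finset (Fin n)) (a : PConfig d J) (b : PConfig d Jᶜ) :
    Config d := fun i =>
  if h : i ∈ J then a ⟨i, h⟩ else b ⟨i, Finset.mem_compl.mpr h⟩

/-- The contraction `ψ ↦ ψ_b`, as a linear map from `V d` to `VJ d J`. -/
def contrL (d : Fin n → ℕ) (J : Finset (Fin n)) (b : PConfig d Jᶜ) :
    V d →ₗ[ℂ] VJ d J where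
  toFun ψ := fun a => ψ (merge d J a b)
  map_add' _ _ := rfl
  map_smul' _ _ := rfl

/-- The reduced space `red_J(S)`: the span of all contractions `ψ_b` with `ψ ∈ S`. -/
noncomputable def red (d : Fin n → ℕ) (J : Finset (Fin n)) (S : Submodule ℂ (V d)) :
    Submodule ℂ (VJ d J) :=
  Submodule.span ℂ {φ | ∃ ψ ∈ S, ∃ b : PConfig d Jᶜ, φ = contrL d J b ψ}

/-- The `k`-reduced tuple `L_k(S) = (red_J(S))_J` (only the components with
`J.card = k` are relevant). -/
noncomputable def Lk (d : Fin n → ℕ) (S : Submodule ℂ (V d)) :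
    ∀ J : Finset (Fin n), Submodule ℂ (VJ d J) :=
  fun J => red d J S

/-- The maximal pre-image of a tuple `η`:
`{ψ : ψ_b ∈ η_J for every k-element subset J and every Jᶜ-configuration b}`. -/
noncomputable def MPI (d : Fin n → ℕ) (k : ℕ) (η : ∀ J : Finset (Fin n), Submodule ℂ (VJ d J)) :
    Submodule ℂ (V d) :=
  ⨅ (J : Finset (Fin n)) (_ : J.card = k) (b : PConfig d Jᶜ), (η J).comap (contrL d J b)

/-- `G` is a `k`-local frustration-free ground-state space: `G` is nonzero and is
cut out by a family of subspaces `W_J ≤ V_J` via the contraction conditions. -/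
def IsFFGroundSpace (d : Fin n → ℕ) (k : ℕ) (G : Submodule ℂ (V d)) : Prop :=
  G ≠ ⊥ ∧ ∃ W : ∀ J : Finset (Fin n), Submodule ℂ (VJ d J),
    G = ⨅ (J : Finset (Fin n)) (_ : J.card = k) (b : PConfig d Jᶜ), (W J).comap (contrL d J b)

end GSS

open GSS

lemma exists_dual_of_nmem {m : ℕ} (g v : Fin m → ℂ) (hv : v ∉ Submodule.span ℂ {g}) :
    ∃ ℓ : (Fin m → ℂ) →ₗ[ℂ] ℂ, ℓ g = 0 ∧ ℓ v ≠ 0 := by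
  set p := Submodule.span ℂ {g} with hp
  have h1 : p.mkQ v ≠ 0 := by
    simpa [Submodule.mkQ_apply, Submodule.Quotient.mk_eq_zero] using hv
  have h2 : ¬ ∀ φ : Module.Dual ℂ ((Fin m → ℂ) ⧸ p), φ (p.mkQ v) = 0 := by
    rw [Module.forall_dual_apply_eq_zero_iff]; exact h1
  push_neg at h2
  obtain ⟨φ, hφ⟩ := h2
  refine ⟨φ.comp p.mkQ, ?_, hφ⟩
  have : p.mkQ g = 0 := by
    simp [Submodule.mkQ_apply, Submodule.Quotient.mk_eq_zero, hp,
      Submodule.mem_span_singleton_self]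
  simp [LinearMap.comp_apply, this]

lemma contr_not_mem_red {n : ℕ} (d : Fin n → ℕ) (f : ∀ i : Fin n, Fin (d i) → ℂ)
    (i₀ : Fin n) (J : Finset (Fin n)) (hi₀ : i₀ ∈ J)
    (a₀ : PConfig d J) (ha₀ : ∀ i : J, f i.1 (a₀ i) ≠ 0)
    (b₀ : PConfig d Jᶜ) (hb₀ : ∀ i : (Jᶜ : Finset (Fin n)), f i.1 (b₀ i) ≠ 0)
    (g : Fin (d i₀) → ℂ) (hg : f i₀ ∉ Submodule.span ℂ {g}) :
    contrL d J b₀ (fun x => ∏ i, f i (x i)) ∉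
      red d J (Submodule.span ℂ
        {(fun x => g (x i₀) * ∏ i ∈ Finset.univ.erase i₀, f i (x i) : V d)}) := by
  obtain ⟨ℓ, hℓg, hℓf⟩ := exists_dual_of_nmem g (f i₀) hg
  set P : J := ⟨i₀, hi₀⟩ with hP
  -- the evaluation map
  set evalA : VJ d J →ₗ[ℂ] (Fin (d i₀) → ℂ) :=
    { toFun := fun χ t => χ (Function.update a₀ P t)
      map_add' := fun _ _ => rfl
      map_smul' := fun _ _ => rfl } with hevalA
  set E : VJ d J →ₗ[ℂ] ℂ := ℓ.comp evalA with hE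
  -- key computation
  have key : ∀ (h : Fin (d i₀) → ℂ) (b : PConfig d Jᶜ) (t : Fin (d i₀)),
      (contrL d J b (fun x => h (x i₀) * ∏ i ∈ Finset.univ.erase i₀, f i (x i)))
        (Function.update a₀ P t)
      = h t * ∏ i ∈ Finset.univ.erase i₀, f i (merge d J a₀ b i) := by
    intro h b t
    show h (merge d J (Function.update a₀ P t) b i₀) * _ = _
    have h1 : merge d J (Function.update a₀ P t) b i₀ = t := by
      simp only [merge, hi₀, dite_true]
      exact Function.update_self P t a₀
    have h2 : ∀ i ∈ Finset.univ.erase i₀,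
        f i (merge d J (Function.update a₀ P t) b i) = f i (merge d J a₀ b i) := by
      intro i hi
      have hne : i ≠ i₀ := Finset.ne_of_mem_erase hi
      by_cases hiJ : i ∈ J
      · have : (⟨i, hiJ⟩ : J) ≠ P := by
          simp [hP, Subtype.ext_iff, hne]
        simp [merge, hiJ, Function.update_of_ne this]
      · simp [merge, hiJ]
    rw [h1, Finset.prod_congr rfl h2]
  set K : PConfig d Jᶜ → ℂ := fun b => ∏ i ∈ Finset.univ.erase i₀, f i (merge d J a₀ b i)
    with hK
  -- E kills the reduced space of span{ψ_g}
  have hker : red d J (Submodule.span ℂ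
      {(fun x => g (x i₀) * ∏ i ∈ Finset.univ.erase i₀, f i (x i) : V d)})
      ≤ LinearMap.ker E := by
    rw [red, Submodule.span_le]
    rintro φ ⟨χ, hχ, b, rfl⟩
    obtain ⟨c, rfl⟩ := Submodule.mem_span_singleton.mp hχ
    simp only [SetLike.mem_coe, LinearMap.mem_ker, map_smul, hE, LinearMap.comp_apply]
    have hev : evalA (contrL d J b
        (fun x => g (x i₀) * ∏ i ∈ Finset.univ.erase i₀, f i (x i))) = K b • g := by
      funext t
      simp only [hevalA, LinearMap.coe_mk, AddHom.coe_mk, Pi.smul_apply, smul_eq_mul, hK]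
      rw [key g b t]; ring
    rw [hev, map_smul, hℓg]
    simp
  -- but E does not kill the contraction of ψ
  intro hmem
  have hzero : E (contrL d J b₀ (fun x => ∏ i, f i (x i))) = 0 := hker hmem
  have hprod : (fun x => ∏ i, f i (x i) : V d)
      = fun x => f i₀ (x i₀) * ∏ i ∈ Finset.univ.erase i₀, f i (x i) := by
    funext x
    rw [← Finset.mul_prod_erase _ _ (Finset.mem_univ i₀)]
  rw [hprod] at hzero
  have hev : evalA (contrL d J b₀
      (fun x => f i₀ (x i₀) * ∏ i ∈ Finset.univ.erase i₀, f i (x i))) = K b₀ • f i₀ := by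
    funext t
    simp only [hevalA, LinearMap.coe_mk, AddHom.coe_mk, Pi.smul_apply, smul_eq_mul, hK]
    rw [key (f i₀) b₀ t]; ring
  rw [hE, LinearMap.comp_apply, hev, map_smul, smul_eq_mul] at hzero
  have hKne : K b₀ ≠ 0 := by
    rw [hK]
    apply Finset.prod_ne_zero_iff.mpr
    intro i hi
    by_cases hiJ : i ∈ J
    · simpa [merge, hiJ] using ha₀ ⟨i, hiJ⟩
    · simpa [merge, hiJ] using hb₀ ⟨i, Finset.mem_compl.mpr hiJ⟩
  exact hℓf (by
    rcases mul_eq_zero.mp hzero with h | h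
    · exact absurd h hKne
    · exact h)

/-- the element of `Θ_k` whose maximal pre-image is a single product
state is not a join prime of `Θ_k`. -/
theorem stmt8 (n : ℕ) (hn : 1 ≤ n) (d : Fin n → ℕ) (hd : ∀ i, 2 ≤ d i)
    (k : ℕ) (hk1 : 1 ≤ k) (hk2 : k ≤ n)
    (f : ∀ i : Fin n, Fin (d i) → ℂ) (hf : ∀ i, f i ≠ 0)
    (ψ : V d) (hψ : ψ = fun x => ∏ i : Fin n, f i (x i)) :
    ∃ S₁ S₂ : Submodule ℂ (V d), S₁ ≠ ⊥ ∧ S₂ ≠ ⊥ ∧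
      (∀ J : Finset (Fin n), J.card = k →
        red d J (Submodule.span ℂ {ψ}) ≤ red d J S₁ ⊔ red d J S₂) ∧
      ¬ (∀ J : Finset (Fin n), J.card = k →
        red d J (Submodule.span ℂ {ψ}) ≤ red d J S₁) ∧
      ¬ (∀ J : Finset (Fin n), J.card = k →
        red d J (Submodule.span ℂ {ψ}) ≤ red d J S₂) := by
  classical
  set i₀ : Fin n := ⟨0, hn⟩ with hi₀def
  have hchoice : ∀ i : Fin n, ∃ t, f i t ≠ 0 := fun i => Function.ne_iff.mp (hf i)
  choose t0 ht0 using hchoice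
  have hf0 : f i₀ ≠ 0 := hf i₀
  -- a vector u outside span{f i₀}
  have hlt : Submodule.span ℂ {f i₀} < ⊤ := by
    apply Submodule.lt_top_of_finrank_lt_finrank
    rw [finrank_span_singleton hf0, Module.finrank_fin_fun]
    have := hd i₀; omega
  obtain ⟨u, -, hu⟩ := SetLike.exists_of_lt hlt
  have hu0 : u ≠ 0 := fun h => hu (h ▸ Submodule.zero_mem _)
  have hg2 : f i₀ - u ≠ 0 := by
    intro h
    exact hu (sub_eq_zero.mp h ▸ Submodule.mem_span_singleton_self _)
  -- f i₀ not in span of either piece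
  have hnm1 : f i₀ ∉ Submodule.span ℂ {u} := by
    intro h
    obtain ⟨c, hc⟩ := Submodule.mem_span_singleton.mp h
    have hc0 : c ≠ 0 := by rintro rfl; simp at hc; exact hf0 hc.symm
    refine hu (Submodule.mem_span_singleton.mpr ⟨c⁻¹, ?_⟩)
    rw [← hc, smul_smul, inv_mul_cancel₀ hc0, one_smul]
  have hnm2 : f i₀ ∉ Submodule.span ℂ {f i₀ - u} := by
    intro h
    obtain ⟨c, hc⟩ := Submodule.mem_span_singleton.mp h
    have hc0 : c ≠ 0 := by rintro rfl; simp at hc; exact hf0 hc.symm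
    have hcu : c • u = (c - 1) • f i₀ := by
      funext t
      have h := congrFun hc t
      simp only [Pi.smul_apply, Pi.sub_apply, smul_eq_mul] at h ⊢
      linear_combination -h
    refine hu (Submodule.mem_span_singleton.mpr ⟨c⁻¹ * (c - 1), ?_⟩)
    rw [mul_smul, ← hcu, smul_smul, inv_mul_cancel₀ hc0, one_smul]
  -- the two product vectors
  set ψ₁ : V d := fun x => u (x i₀) * ∏ i ∈ Finset.univ.erase i₀, f i (x i) with hψ₁
  set ψ₂ : V d := fun x => (f i₀ - u) (x i₀) * ∏ i ∈ Finset.univ.erase i₀, f i (x i) with hψ₂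
  have hadd : ψ₁ + ψ₂ = ψ := by
    funext x
    simp only [hψ, hψ₁, hψ₂, Pi.add_apply]
    rw [← Finset.mul_prod_erase _ (fun i => f i (x i)) (Finset.mem_univ i₀)]
    simp only [Pi.sub_apply]
    ring
  -- nonvanishing of product vectors
  have hprodvec_ne : ∀ g : Fin (d i₀) → ℂ, g ≠ 0 →
      (fun x => g (x i₀) * ∏ i ∈ Finset.univ.erase i₀, f i (x i) : V d) ≠ 0 := by
    intro g hg h0
    obtain ⟨s, hs⟩ := Function.ne_iff.mp hg
    have := congrFun h0 (Function.update t0 i₀ s)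
    simp only [Pi.zero_apply, Function.update_self] at this
    rcases mul_eq_zero.mp this with h | h
    · exact hs h
    · obtain ⟨i, hi, hfi⟩ := Finset.prod_eq_zero_iff.mp h
      have hne : i ≠ i₀ := Finset.ne_of_mem_erase hi
      rw [Function.update_of_ne hne] at hfi
      exact ht0 i hfi
  refine ⟨Submodule.span ℂ {ψ₁}, Submodule.span ℂ {ψ₂}, ?_, ?_, ?_, ?_, ?_⟩
  · simpa [Submodule.span_singleton_eq_bot] using hprodvec_ne u hu0
  · rw [Ne, Submodule.span_singleton_eq_bot]; exact hprodvec_ne (f i₀ - u) hg2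
  · -- the join bound
    intro J hJ
    rw [red, Submodule.span_le]
    rintro φ ⟨χ, hχ, b, rfl⟩
    obtain ⟨c, rfl⟩ := Submodule.mem_span_singleton.mp hχ
    have h1 : contrL d J b (c • ψ) = contrL d J b (c • ψ₁) + contrL d J b (c • ψ₂) := by
      rw [← hadd, smul_add, map_add]
    rw [SetLike.mem_coe, h1]
    exact Submodule.add_mem _
      (Submodule.mem_sup_left (Submodule.subset_span
        ⟨c • ψ₁, Submodule.smul_mem _ c (Submodule.mem_span_singleton_self _), b, rfl⟩))
      (Submodule.mem_sup_right (Submodule.subset_span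
        ⟨c • ψ₂, Submodule.smul_mem _ c (Submodule.mem_span_singleton_self _), b, rfl⟩))
  all_goals {
    -- common setup for both non-containments
    intro H
    obtain ⟨J₀, hsub, -, hcard⟩ := Finset.exists_subsuperset_card_eq
      (Finset.subset_univ {i₀}) (by simpa using hk1) (by simpa using hk2)
    have hi₀J : i₀ ∈ J₀ := hsub (Finset.mem_singleton_self i₀)
    set a₀ : PConfig d J₀ := fun i => t0 i.1 with ha₀def
    set b₀ : PConfig d J₀ᶜ := fun i => t0 i.1 with hb₀def
    have hmem : contrL d J₀ b₀ ψ ∈ red d J₀ (Submodule.span ℂ {ψ}) :=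
      Submodule.subset_span ⟨ψ, Submodule.mem_span_singleton_self _, b₀, rfl⟩
    have hmem' := H J₀ hcard hmem
    rw [hψ] at hmem'
    first
    | exact contr_not_mem_red d f i₀ J₀ hi₀J a₀ (fun i => ht0 i.1) b₀ (fun i => ht0 i.1)
        u hnm1 hmem'
    | exact contr_not_mem_red d f i₀ J₀ hi₀J a₀ (fun i => ht0 i.1) b₀ (fun i => ht0 i.1)
        (f i₀ - u) hnm2 hmem'
  }
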